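/- For a commutative ring R, elements t_1,...,t_n and p_r,...,p_n of R, define E_{r,n}(t_1,...,t_n; p_r,...,p_n) = Σ_{s=0}^{r} (-1)^{r+s} e_s(t_1,...,t_n) · h_{r-s}(p_r,...,p_n), with the convention E_{0,n} = 1 and E_{r,n} = 0 if n < r. Then for 1 ≤ r ≤ n, E_{r,n}(t_1,...,t_n; p_r,...,p_n) = (t_n − p_n) · E_{r-1,n-1}(t_1,...,t_{n-1}; p_r,...,p_n) + E_{r,n-1}(t_1,...,t_{n-1}; p_r,...,p_{n-1}). -/

import Mathlib

/-- The elementary symmetric polynomial of degree `s` in the variables `t j`, `j ∈ S`. -/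
def esym {R : Type*} [CommRing R] (s : ℕ) (S : Finset ℕ) (t : ℕ → R) : R :=
  ∑ J ∈ S.powersetCard s, ∏ j ∈ J, t j

/-- The complete homogeneous symmetric polynomial of degree `k` in the variables `t j`, `j ∈ S`. -/
def hsym {R : Type*} [CommRing R] (k : ℕ) (S : Finset ℕ) (t : ℕ → R) : R :=
  ∑ m ∈ S.sym k, ((m : Multiset ℕ).map t).prod

section Aux
variable {R : Type*} [CommRing R]

lemma esym_zero (S : Finset ℕ) (t : ℕ → R) : esym 0 S t = 1 := by
  simp [esym]

lemma hsym_zero (S : Finset ℕ) (t : ℕ → R) : hsym 0 S t = 1 := by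
  rw [hsym, Finset.sym_zero, Finset.sum_singleton]
  rfl

lemma esym_of_card_lt {s : ℕ} {S : Finset ℕ} (h : S.card < s) (t : ℕ → R) :
    esym s S t = 0 := by
  simp [esym, Finset.powersetCard_eq_empty.2 h]

lemma hsym_empty {k : ℕ} (hk : k ≠ 0) (t : ℕ → R) : hsym k (∅ : Finset ℕ) t = 0 := by
  obtain ⟨k, rfl⟩ := Nat.exists_eq_succ_of_ne_zero hk
  simp [hsym]

lemma esym_insert {x : ℕ} {S : Finset ℕ} (h : x ∉ S) (s : ℕ) (t : ℕ → R) :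
    esym (s + 1) (insert x S) t = esym (s + 1) S t + t x * esym s S t := by
  rw [esym, Finset.powersetCard_succ_insert h, Finset.sum_union, esym, esym, Finset.mul_sum]
  · congr 1
    rw [Finset.sum_image]
    · refine Finset.sum_congr rfl fun J hJ => ?_
      rw [Finset.prod_insert]
      exact fun hx => h ((Finset.mem_powersetCard.1 hJ).1 hx)
    · intro a ha b hb hab
      have ha' : x ∉ a := fun hx => h ((Finset.mem_powersetCard.1 ha).1 hx)
      have hb' : x ∉ b := fun hx => h ((Finset.mem_powersetCard.1 hb).1 hx)
      rw [← Finset.erase_insert ha', ← Finset.erase_insert hb', hab]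
  · rw [Finset.disjoint_left]
    intro J hJ hJ'
    obtain ⟨K, hK, rfl⟩ := Finset.mem_image.1 hJ'
    exact h ((Finset.mem_powersetCard.1 hJ).1 (Finset.mem_insert_self x K))

lemma hsym_insert {x : ℕ} {S : Finset ℕ} (h : x ∉ S) (k : ℕ) (t : ℕ → R) :
    hsym (k + 1) (insert x S) t = t x * hsym k (insert x S) t + hsym (k + 1) S t := by
  classical
  rw [hsym, hsym, hsym,
    ← Finset.filter_union_filter_not_eq (fun m => x ∈ m) ((insert x S).sym (k + 1)),
    Finset.sum_union (Finset.disjoint_filter_filter_not _ _ _)]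
  congr 1
  · have h2 : ((insert x S).sym (k + 1)).filter (fun m => x ∈ m)
        = ((insert x S).sym k).image (Sym.cons x) := by
      ext m
      simp only [Finset.mem_filter, Finset.mem_image]
      constructor
      · rintro ⟨hmT, hxm⟩
        obtain ⟨u, hu⟩ := Multiset.exists_cons_of_mem (show x ∈ m.1 from hxm)
        have hcard : Multiset.card u = k := by
          have hm2 : Multiset.card m.1 = k + 1 := m.2
          rw [hu] at hm2
          simpa using hm2
        refine ⟨Sym.mk u hcard, ?_, ?_⟩
        · rw [Finset.mem_sym_iff] at hmT ⊢
          intro a ha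
          have ha' : a ∈ u := ha
          have : a ∈ m.1 := by rw [hu]; exact Multiset.mem_cons_of_mem ha'
          exact hmT a this
        · exact Subtype.ext hu.symm
      · rintro ⟨m', hm', rfl⟩
        refine ⟨?_, Sym.mem_cons_self x m'⟩
        rw [Finset.mem_sym_iff] at hm' ⊢
        intro a ha
        rcases Sym.mem_cons.1 ha with rfl | ha'
        · exact Finset.mem_insert_self _ _
        · exact hm' a ha'
    rw [h2, Finset.sum_image (fun a _ b _ hab => (Sym.cons_inj_right x a b).1 hab),
      Finset.mul_sum]
    refine Finset.sum_congr rfl fun m' _ => ?_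
    rw [Sym.coe_cons, Multiset.map_cons, Multiset.prod_cons]
  · congr 1
    ext m
    simp only [Finset.mem_filter, Finset.mem_sym_iff, Finset.mem_insert]
    constructor
    · rintro ⟨hall, hx⟩ a ha
      rcases hall a ha with rfl | h'
      · exact absurd ha hx
      · exact h'
    · intro hall
      exact ⟨fun a ha => Or.inr (hall a ha), fun hx => h (hall x hx)⟩

lemma hsym_shift (k a b : ℕ) (p : ℕ → R) :
    hsym k (Finset.Icc a b) (fun j => p (j + 1)) = hsym k (Finset.Icc (a + 1) (b + 1)) p := by
  classical
  rw [hsym, hsym]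
  refine Finset.sum_nbij' (fun m => m.map (· + 1)) (fun m => m.map (· - 1))
    ?_ ?_ ?_ ?_ ?_
  · intro m hm
    rw [Finset.mem_sym_iff] at hm ⊢
    intro c hc
    obtain ⟨d, hd, rfl⟩ := Sym.mem_map.1 hc
    have := hm d hd
    rw [Finset.mem_Icc] at this ⊢
    omega
  · intro m hm
    rw [Finset.mem_sym_iff] at hm ⊢
    intro c hc
    obtain ⟨d, hd, rfl⟩ := Sym.mem_map.1 hc
    have := hm d hd
    rw [Finset.mem_Icc] at this ⊢
    omega
  · intro m hm
    rw [Sym.map_map, show ((fun x => x - 1) ∘ fun x => x + 1) = (fun x : ℕ => x) by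
      funext x; simp, Sym.map_id']
  · intro m hm
    rw [Finset.mem_sym_iff] at hm
    rw [Sym.map_map]
    rw [show Sym.map ((fun x => x + 1) ∘ fun x => x - 1) m = Sym.map (fun x : ℕ => x) m from
      Sym.map_congr fun c hc => by
        have := hm c hc
        rw [Finset.mem_Icc] at this
        simp only [Function.comp_apply]
        omega, Sym.map_id']
  · intro m hm
    rw [Sym.coe_map, Multiset.map_map]
    rfl

lemma key (q : ℕ) (E e H h' : ℕ → R) (t' p' : R)
    (hE : ∀ s, E (s + 1) = e (s + 1) + t' * e s) (hE0 : E 0 = 1) (he0 : e 0 = 1)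
    (hH : ∀ k, H (k + 1) = p' * H k + h' (k + 1)) (hH0 : H 0 = 1) (hh0 : h' 0 = 1) :
    ∑ s ∈ Finset.range (q + 2), (-1 : R) ^ (q + 1 + s) * E s * H (q + 1 - s)
    = (t' - p') * ∑ s ∈ Finset.range (q + 1), (-1 : R) ^ (q + s) * e s * H (q - s)
      + ∑ s ∈ Finset.range (q + 2), (-1 : R) ^ (q + 1 + s) * e s * h' (q + 1 - s) := by
  have claim1 : ∑ s ∈ Finset.range (q + 2), (-1 : R) ^ (q + 1 + s) * E s * H (q + 1 - s)
      = t' * ∑ s ∈ Finset.range (q + 1), (-1 : R) ^ (q + s) * e s * H (q - s)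
        + ∑ s ∈ Finset.range (q + 2), (-1 : R) ^ (q + 1 + s) * e s * H (q + 1 - s) := by
    rw [Finset.sum_range_succ' (fun s => (-1 : R) ^ (q + 1 + s) * E s * H (q + 1 - s)) (q + 1),
      Finset.sum_range_succ' (fun s => (-1 : R) ^ (q + 1 + s) * e s * H (q + 1 - s)) (q + 1)]
    have hcong : ∀ i ∈ Finset.range (q + 1),
        (-1 : R) ^ (q + 1 + (i + 1)) * E (i + 1) * H (q + 1 - (i + 1))
        = t' * ((-1 : R) ^ (q + i) * e i * H (q - i))
          + (-1 : R) ^ (q + 1 + (i + 1)) * e (i + 1) * H (q + 1 - (i + 1)) := by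
      intro i _
      rw [hE i, show q + 1 - (i + 1) = q - i by omega, show q + 1 + (i + 1) = (q + i) + 2 by omega, pow_add, neg_one_sq, mul_one]
      ring
    rw [Finset.sum_congr rfl hcong, Finset.sum_add_distrib, ← Finset.mul_sum, hE0, he0]
    ring
  have claim2 : ∑ s ∈ Finset.range (q + 2), (-1 : R) ^ (q + 1 + s) * e s * H (q + 1 - s)
      = -(p' * ∑ s ∈ Finset.range (q + 1), (-1 : R) ^ (q + s) * e s * H (q - s))
        + ∑ s ∈ Finset.range (q + 2), (-1 : R) ^ (q + 1 + s) * e s * h' (q + 1 - s) := by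
    rw [Finset.sum_range_succ (fun s => (-1 : R) ^ (q + 1 + s) * e s * H (q + 1 - s)) (q + 1),
      Finset.sum_range_succ (fun s => (-1 : R) ^ (q + 1 + s) * e s * h' (q + 1 - s)) (q + 1)]
    have hcong : ∀ s ∈ Finset.range (q + 1),
        (-1 : R) ^ (q + 1 + s) * e s * H (q + 1 - s)
        = -(p' * ((-1 : R) ^ (q + s) * e s * H (q - s)))
          + (-1 : R) ^ (q + 1 + s) * e s * h' (q + 1 - s) := by
      intro s hs
      have hle : s ≤ q := Nat.lt_succ_iff.1 (Finset.mem_range.1 hs)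
      rw [show q + 1 - s = (q - s) + 1 by omega, hH (q - s),
        show q + 1 + s = (q + s) + 1 by omega, pow_succ]
      ring
    rw [Finset.sum_congr rfl hcong, Finset.sum_add_distrib, Finset.sum_neg_distrib,
      ← Finset.mul_sum, show q + 1 - (q + 1) = 0 by omega, hH0, hh0]
    ring
  rw [claim1, claim2]
  ring
end Aux

/-- `E_{r,n}(t_1,…,t_n; p_r,…,p_n) = Σ_{s=0}^r (-1)^{r+s} e_s(t_1,…,t_n) h_{r-s}(p_r,…,p_n)`,
with the conventions `E_{0,n} = 1` and `E_{r,n} = 0` if `n < r`. -/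
def Efun {R : Type*} [CommRing R] (r n : ℕ) (t p : ℕ → R) : R :=
  if n < r then 0
  else ∑ s ∈ Finset.range (r + 1),
    (-1 : R) ^ (r + s) * esym s (Finset.Icc 1 n) t * hsym (r - s) (Finset.Icc r n) p

/-- Recursion: `E_{r,n}(t_1,…,t_n;p_r,…,p_n)
  = (t_n − p_n) E_{r-1,n-1}(t_1,…,t_{n-1};p_r,…,p_n) + E_{r,n-1}(t_1,…,t_{n-1};p_r,…,p_{n-1})`,
where the parameter list `p_r,…,p_n` of `E_{r-1,n-1}` is realised by the shift `j ↦ p (j+1)`. -/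
theorem Efun_recursion {R : Type*} [CommRing R] (r n : ℕ) (t p : ℕ → R)
    (h1 : 1 ≤ r) (h2 : r ≤ n) :
    Efun r n t p =
      (t n - p n) * Efun (r - 1) (n - 1) t (fun j => p (j + 1)) + Efun r (n - 1) t p := by
  obtain ⟨q, rfl⟩ : ∃ q, r = q + 1 := ⟨r - 1, by omega⟩
  obtain ⟨m, rfl⟩ : ∃ m, n = m + 1 := ⟨n - 1, by omega⟩
  have hqm : q ≤ m := by omega
  simp only [Nat.add_sub_cancel]
  have hmemE : (m + 1) ∉ Finset.Icc 1 m := by simp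
  have hmemH : (m + 1) ∉ Finset.Icc (q + 1) m := by simp
  have hIccE : Finset.Icc 1 (m + 1) = insert (m + 1) (Finset.Icc 1 m) := by
    ext j; simp only [Finset.mem_Icc, Finset.mem_insert]; omega
  have hIccH : Finset.Icc (q + 1) (m + 1) = insert (m + 1) (Finset.Icc (q + 1) m) := by
    ext j; simp only [Finset.mem_Icc, Finset.mem_insert]; omega
  have hB : Efun (q + 1) m t p = ∑ s ∈ Finset.range (q + 2),
      (-1 : R) ^ (q + 1 + s) * esym s (Finset.Icc 1 m) t
        * hsym (q + 1 - s) (Finset.Icc (q + 1) m) p := by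
    rw [Efun]
    by_cases hc : m < q + 1
    · have hm : m = q := by omega
      subst hm
      rw [if_pos hc, eq_comm]
      refine Finset.sum_eq_zero fun s hs => ?_
      by_cases hsq : s = m + 1
      · subst hsq
        rw [esym_of_card_lt (by rw [Nat.card_Icc]; omega)]
        ring
      · have hse : s ≤ m := by
          have := Finset.mem_range.1 hs; omega
        rw [show Finset.Icc (m + 1) m = ∅ from Finset.Icc_eq_empty (by omega),
          hsym_empty (by omega)]
        ring
    · rw [if_neg hc]
  have hA : Efun q m t (fun j => p (j + 1)) = ∑ s ∈ Finset.range (q + 1),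
      (-1 : R) ^ (q + s) * esym s (Finset.Icc 1 m) t
        * hsym (q - s) (Finset.Icc (q + 1) (m + 1)) p := by
    rw [Efun, if_neg (by omega)]
    exact Finset.sum_congr rfl fun s hs => by rw [hsym_shift]
  rw [Efun, if_neg (by omega), hA, hB]
  exact key q (fun s => esym s (Finset.Icc 1 (m + 1)) t) (fun s => esym s (Finset.Icc 1 m) t)
    (fun k => hsym k (Finset.Icc (q + 1) (m + 1)) p) (fun k => hsym k (Finset.Icc (q + 1) m) p)
    (t (m + 1)) (p (m + 1))
    (fun s => by rw [hIccE]; exact esym_insert hmemE s t)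
    (esym_zero _ _) (esym_zero _ _)
    (fun k => by rw [hIccH]; exact hsym_insert hmemH k p)
    (hsym_zero _ _) (hsym_zero _ _)
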